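/- arXiv:2111.05640 — 9 statements merged into one kernel-verified Lean document; each statement's English description precedes it below -/
import Mathlib

section
/- Let α, β ∈ ℂ with α ≠ 0 and β ≠ 0 and |α|² + |β|² = 1, and let a₁, a₃ ∈ ℝ with a₁ ≠ 0, a₃ ≠ 0 and a₁² + a₃² = 1. Set q = α + β·i and p = a₁ + a₃·j in the biquaternions ℍ[ℂ] (where a₁, a₃ are viewed as real complex scalars). Then the concurrence of Λ(q) = p·q·p equals 4·|α|·|β|·|a₁|·|a₃|; in particular C(p·q·p) ≠ 0, i.e., Λ(q) is entangled. -/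
open Quaternion

/-- The concurrence of a biquaternion `x = x₁ + x₂·i + x₃·j + x₄·k`:
`C(x) = 2·|x₁·x₄ − x₂·x₃|`.  `x` is entangled iff `C(x) ≠ 0`. -/
noncomputable def concurrence (x : ℍ[ℂ]) : ℝ :=
  2 * ‖x.re * x.imK - x.imI * x.imJ‖

theorem stmt_0 (α β : ℂ) (hα : α ≠ 0) (hβ : β ≠ 0)
    (hαβ : ‖α‖ ^ 2 + ‖β‖ ^ 2 = 1)
    (a₁ a₃ : ℝ) (ha₁ : a₁ ≠ 0) (ha₃ : a₃ ≠ 0) (hab : a₁ ^ 2 + a₃ ^ 2 = 1)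
    (q p : ℍ[ℂ]) (hq : q = (⟨α, β, 0, 0⟩ : ℍ[ℂ])) (hp : p = (⟨(a₁ : ℂ), 0, (a₃ : ℂ), 0⟩ : ℍ[ℂ])) :
    concurrence (p * q * p) =
      4 * ‖α‖ * ‖β‖ * |a₁| * |a₃| ∧
    concurrence (p * q * p) ≠ 0 := by
  subst hq hp
  have hcast : ((a₁ : ℂ) ^ 2 + (a₃ : ℂ) ^ 2) = 1 := by
    norm_cast
  have hval : ((⟨(a₁ : ℂ), 0, (a₃ : ℂ), 0⟩ : ℍ[ℂ]) * ⟨α, β, 0, 0⟩ * ⟨(a₁ : ℂ), 0, (a₃ : ℂ), 0⟩).re *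
      ((⟨(a₁ : ℂ), 0, (a₃ : ℂ), 0⟩ : ℍ[ℂ]) * ⟨α, β, 0, 0⟩ * ⟨(a₁ : ℂ), 0, (a₃ : ℂ), 0⟩).imK -
      ((⟨(a₁ : ℂ), 0, (a₃ : ℂ), 0⟩ : ℍ[ℂ]) * ⟨α, β, 0, 0⟩ * ⟨(a₁ : ℂ), 0, (a₃ : ℂ), 0⟩).imI *
      ((⟨(a₁ : ℂ), 0, (a₃ : ℂ), 0⟩ : ℍ[ℂ]) * ⟨α, β, 0, 0⟩ * ⟨(a₁ : ℂ), 0, (a₃ : ℂ), 0⟩).imJ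
      = -(2 * (a₁ : ℂ) * (a₃ : ℂ) * ((a₁ : ℂ) ^ 2 + (a₃ : ℂ) ^ 2) * α * β) := by
    simp [Quaternion.re_mul, Quaternion.imI_mul, Quaternion.imJ_mul, Quaternion.imK_mul]
    ring
  rw [hcast] at hval
  have hkey : concurrence ((⟨(a₁ : ℂ), 0, (a₃ : ℂ), 0⟩ : ℍ[ℂ]) * (⟨α, β, 0, 0⟩ : ℍ[ℂ]) *
      (⟨(a₁ : ℂ), 0, (a₃ : ℂ), 0⟩ : ℍ[ℂ])) = 4 * ‖α‖ * ‖β‖ * |a₁| * |a₃| := by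
    unfold concurrence
    rw [hval]
    simp [map_mul, Complex.norm_real, abs_of_nonneg]
    ring
  refine ⟨hkey, ?_⟩
  refine ne_of_eq_of_ne hkey ?_
  have h1 : 0 < ‖α‖ := norm_pos_iff.mpr hα
  have h2 : 0 < ‖β‖ := norm_pos_iff.mpr hβ
  have h3 : 0 < |a₁| := abs_pos.mpr ha₁
  have h4 : 0 < |a₃| := abs_pos.mpr ha₃
  positivity
end

section
/- Let α, β ∈ ℂ with α ≠ 0 and β ≠ 0 and |α|² + |β|² = 1, and let a₂, a₄ ∈ ℝ with a₂ ≠ 0, a₄ ≠ 0 and a₂² + a₄² = 1. Set q = α + β·i and p = a₂·i + a₄·k in the biquaternions ℍ[ℂ]. Then the concurrence of Λ(q) = p·q·p equals 4·|α|·|β|·|a₂|·|a₄|; in particular C(p·q·p) ≠ 0, i.e., Λ(q) is entangled. -/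
open Quaternion

theorem stmt_1 (α β : ℂ) (hα : α ≠ 0) (hβ : β ≠ 0)
    (hαβ : ‖α‖ ^ 2 + ‖β‖ ^ 2 = 1)
    (a₂ a₄ : ℝ) (ha₂ : a₂ ≠ 0) (ha₄ : a₄ ≠ 0) (hab : a₂ ^ 2 + a₄ ^ 2 = 1)
    (q p : ℍ[ℂ]) (hq : q = (⟨α, β, 0, 0⟩ : ℍ[ℂ])) (hp : p = (⟨0, (a₂ : ℂ), 0, (a₄ : ℂ)⟩ : ℍ[ℂ])) :
    concurrence (p * q * p) =
      4 * ‖α‖ * ‖β‖ * |a₂| * |a₄| ∧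
    concurrence (p * q * p) ≠ 0 := by
  subst hq hp
  have hab' : (a₂ : ℂ) ^ 2 + (a₄ : ℂ) ^ 2 = 1 := by exact_mod_cast hab
  have hpqp0 : (⟨0, (a₂ : ℂ), 0, (a₄ : ℂ)⟩ : ℍ[ℂ]) * ⟨α, β, 0, 0⟩ * ⟨0, (a₂ : ℂ), 0, (a₄ : ℂ)⟩ =
      ⟨-((a₂:ℂ)^2 + (a₄:ℂ)^2) * α, ((a₄:ℂ)^2 - (a₂:ℂ)^2) * β, 0, -2 * (a₂:ℂ) * (a₄:ℂ) * β⟩ := by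
    ext <;>
      simp only [Quaternion.re_mul, Quaternion.imI_mul, Quaternion.imJ_mul,
        Quaternion.imK_mul, QuaternionAlgebra.re_mul, QuaternionAlgebra.imI_mul,
        QuaternionAlgebra.imJ_mul, QuaternionAlgebra.imK_mul] <;>
      ring
  have hpqp : (⟨0, (a₂ : ℂ), 0, (a₄ : ℂ)⟩ : ℍ[ℂ]) * ⟨α, β, 0, 0⟩ * ⟨0, (a₂ : ℂ), 0, (a₄ : ℂ)⟩ =
      ⟨-α, ((a₄:ℂ)^2 - (a₂:ℂ)^2) * β, 0, -2 * (a₂:ℂ) * (a₄:ℂ) * β⟩ := by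
    rw [hpqp0, hab']
    norm_num
  erw [hpqp]
  have hval : concurrence (⟨-α, ((a₄:ℂ)^2 - (a₂:ℂ)^2) * β, 0,
      -2 * (a₂:ℂ) * (a₄:ℂ) * β⟩ : ℍ[ℂ]) = 4 * ‖α‖ * ‖β‖ * |a₂| * |a₄| := by
    show 2 * ‖-α * (-2 * (a₂:ℂ) * (a₄:ℂ) * β) - ((a₄:ℂ)^2 - (a₂:ℂ)^2) * β * 0‖ = _
    have : -α * (-2 * (a₂:ℂ) * (a₄:ℂ) * β) - ((a₄:ℂ)^2 - (a₂:ℂ)^2) * β * 0 =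
        2 * (a₂:ℂ) * (a₄:ℂ) * α * β := by ring
    rw [this]
    simp [map_mul, Complex.norm_real]
    ring
  refine ⟨hval, ?_⟩
  rw [hval]
  have h1 : ‖α‖ ≠ 0 := by simpa using hα
  have h2 : ‖β‖ ≠ 0 := by simpa using hβ
  have h3 : |a₂| ≠ 0 := abs_ne_zero.mpr ha₂
  have h4 : |a₄| ≠ 0 := abs_ne_zero.mpr ha₄
  exact mul_ne_zero (mul_ne_zero (mul_ne_zero (mul_ne_zero (by norm_num) h1) h2) h3) h4
end

section
/- Let α, β ∈ ℂ with α ≠ 0 and β ≠ 0 and |α|² + |β|² = 1, and let a₂, a₄ ∈ ℝ with a₂ ≠ 0, a₄ ≠ 0 and a₂² + a₄² = 1. Set q = α·j + β·k and p = a₂·i + a₄·k in the biquaternions ℍ[ℂ]. Then the concurrence of Λ(q) = p·q·p equals 4·|α|·|β|·|a₂|·|a₄|; in particular C(p·q·p) ≠ 0, i.e., Λ(q) is entangled. -/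
open Quaternion

theorem stmt_3 (α β : ℂ) (hα : α ≠ 0) (hβ : β ≠ 0)
    (hαβ : ‖α‖ ^ 2 + ‖β‖ ^ 2 = 1)
    (a₂ a₄ : ℝ) (ha₂ : a₂ ≠ 0) (ha₄ : a₄ ≠ 0) (hab : a₂ ^ 2 + a₄ ^ 2 = 1)
    (q p : ℍ[ℂ]) (hq : q = (⟨0, 0, α, β⟩ : ℍ[ℂ])) (hp : p = (⟨0, (a₂ : ℂ), 0, (a₄ : ℂ)⟩ : ℍ[ℂ])) :
    concurrence (p * q * p) =
      4 * ‖α‖ * ‖β‖ * |a₂| * |a₄| ∧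
    concurrence (p * q * p) ≠ 0 := by
  have hab' : (a₂ : ℂ) ^ 2 + (a₄ : ℂ) ^ 2 = 1 := by exact_mod_cast hab
  have h : (p * q * p).re * (p * q * p).imK - (p * q * p).imI * (p * q * p).imJ
      = 2 * (a₂ : ℂ) * a₄ * α * β := by
    have p1 : p.re = 0 := by rw [hp]
    have p2 : p.imI = a₂ := by rw [hp]
    have p3 : p.imJ = 0 := by rw [hp]
    have p4 : p.imK = a₄ := by rw [hp]
    have q1 : q.re = 0 := by rw [hq]
    have q2 : q.imI = 0 := by rw [hq]
    have q3 : q.imJ = α := by rw [hq]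
    have q4 : q.imK = β := by rw [hq]
    simp only [Quaternion.re_mul, Quaternion.imI_mul, Quaternion.imJ_mul, Quaternion.imK_mul,
      p1, p2, p3, p4, q1, q2, q3, q4]
    linear_combination (2 * (a₂ : ℂ) * a₄ * α * β) * hab'
  have hc : concurrence (p * q * p) = 4 * ‖α‖ * ‖β‖ * |a₂| * |a₄| := by
    rw [concurrence, h]
    simp only [norm_mul, Complex.norm_two, Complex.norm_real, Real.norm_eq_abs]
    ring
  refine ⟨hc, ?_⟩
  rw [hc]
  have := norm_ne_zero_iff.2 hα
  have := norm_ne_zero_iff.2 hβ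
  have := abs_ne_zero.2 ha₂
  have := abs_ne_zero.2 ha₄
  positivity
end

section
/- Let α, β ∈ ℂ with α ≠ 0 and β ≠ 0 and |α|² + |β|² = 1, and let a₁, a₂ ∈ ℝ with a₁ ≠ 0, a₂ ≠ 0 and a₁² + a₂² = 1. Set q = α + β·j and p = a₁ + a₂·i in the biquaternions ℍ[ℂ]. Then the concurrence of Λ(q) = p·q·p equals 4·|α|·|β|·|a₁|·|a₂|; in particular C(p·q·p) ≠ 0, i.e., Λ(q) is entangled. -/
open Quaternion

theorem stmt_4 (α β : ℂ) (hα : α ≠ 0) (hβ : β ≠ 0)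
    (hαβ : ‖α‖ ^ 2 + ‖β‖ ^ 2 = 1)
    (a₁ a₂ : ℝ) (ha₁ : a₁ ≠ 0) (ha₂ : a₂ ≠ 0) (hab : a₁ ^ 2 + a₂ ^ 2 = 1)
    (q p : ℍ[ℂ]) (hq : q = (⟨α, 0, β, 0⟩ : ℍ[ℂ])) (hp : p = (⟨(a₁ : ℂ), (a₂ : ℂ), 0, 0⟩ : ℍ[ℂ])) :
    concurrence (p * q * p) =
      4 * ‖α‖ * ‖β‖ * |a₁| * |a₂| ∧
    concurrence (p * q * p) ≠ 0 := by
  subst hq hp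
  have key : ((⟨(a₁:ℂ), a₂, 0, 0⟩ * ⟨α, 0, β, 0⟩ * ⟨(a₁:ℂ), a₂, 0, 0⟩ : ℍ[ℂ]).re *
      (⟨(a₁:ℂ), a₂, 0, 0⟩ * ⟨α, 0, β, 0⟩ * ⟨(a₁:ℂ), a₂, 0, 0⟩ : ℍ[ℂ]).imK -
      (⟨(a₁:ℂ), a₂, 0, 0⟩ * ⟨α, 0, β, 0⟩ * ⟨(a₁:ℂ), a₂, 0, 0⟩ : ℍ[ℂ]).imI *
      (⟨(a₁:ℂ), a₂, 0, 0⟩ * ⟨α, 0, β, 0⟩ * ⟨(a₁:ℂ), a₂, 0, 0⟩ : ℍ[ℂ]).imJ)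
      = -(2 * a₁ * a₂ * α * β) := by
    have h : ((a₁:ℂ)^2 + (a₂:ℂ)^2) = 1 := by
      exact_mod_cast hab
    repeat erw [Quaternion.re_mul]
    repeat erw [Quaternion.imI_mul]
    repeat erw [Quaternion.imJ_mul]
    repeat erw [Quaternion.imK_mul]
    repeat erw [Quaternion.re_mul]
    repeat erw [Quaternion.imI_mul]
    repeat erw [Quaternion.imJ_mul]
    repeat erw [Quaternion.imK_mul]
    linear_combination (-(2*(a₁:ℂ)*a₂*α*β)) * h
  have heq : concurrence (⟨(a₁:ℂ), a₂, 0, 0⟩ * ⟨α, 0, β, 0⟩ * ⟨(a₁:ℂ), a₂, 0, 0⟩ : ℍ[ℂ])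
      = 4 * ‖α‖ * ‖β‖ * |a₁| * |a₂| := by
    rw [concurrence, key]
    rw [show -(2 * (a₁:ℂ) * a₂ * α * β) = ((2*a₁*a₂ : ℝ):ℂ) * (-(α*β)) by push_cast; ring]
    rw [norm_mul, Complex.norm_real, Real.norm_eq_abs, norm_neg, norm_mul]
    rw [abs_mul, abs_mul]
    ring_nf
  refine ⟨heq, ?_⟩
  rw [heq]
  have h1 : ‖α‖ ≠ 0 := by simpa using hα
  have h2 : ‖β‖ ≠ 0 := by simpa using hβ
  have h3 : |a₁| ≠ 0 := by simpa using ha₁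
  have h4 : |a₂| ≠ 0 := by simpa using ha₂
  positivity
end

section
/- Let α, β ∈ ℂ with α ≠ 0 and β ≠ 0 and |α|² + |β|² = 1, and let a₃, a₄ ∈ ℝ with a₃ ≠ 0, a₄ ≠ 0 and a₃² + a₄² = 1. Set q = α + β·j and p = a₃·j + a₄·k in the biquaternions ℍ[ℂ]. Then the concurrence of Λ(q) = p·q·p equals 4·|α|·|β|·|a₃|·|a₄|; in particular C(p·q·p) ≠ 0, i.e., Λ(q) is entangled. -/
open Quaternion

theorem stmt_5 (α β : ℂ) (hα : α ≠ 0) (hβ : β ≠ 0)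
    (hαβ : ‖α‖ ^ 2 + ‖β‖ ^ 2 = 1)
    (a₃ a₄ : ℝ) (ha₃ : a₃ ≠ 0) (ha₄ : a₄ ≠ 0) (hab : a₃ ^ 2 + a₄ ^ 2 = 1)
    (q p : ℍ[ℂ]) (hq : q = (⟨α, 0, β, 0⟩ : ℍ[ℂ])) (hp : p = (⟨0, 0, (a₃ : ℂ), (a₄ : ℂ)⟩ : ℍ[ℂ])) :
    concurrence (p * q * p) =
      4 * ‖α‖ * ‖β‖ * |a₃| * |a₄| ∧
    concurrence (p * q * p) ≠ 0 := by
  have hcast : ((a₃ : ℂ) ^ 2 + (a₄ : ℂ) ^ 2) = 1 := by exact_mod_cast hab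
  have key : concurrence (p * q * p) =
      4 * ‖α‖ * ‖β‖ * |a₃| * |a₄| := by
    have hq1 : q.re = α := by rw [hq]
    have hq2 : q.imI = 0 := by rw [hq]
    have hq3 : q.imJ = β := by rw [hq]
    have hq4 : q.imK = 0 := by rw [hq]
    have hp1 : p.re = 0 := by rw [hp]
    have hp2 : p.imI = 0 := by rw [hp]
    have hp3 : p.imJ = (a₃ : ℂ) := by rw [hp]
    have hp4 : p.imK = (a₄ : ℂ) := by rw [hp]
    simp only [concurrence, Quaternion.re_mul, Quaternion.imI_mul, Quaternion.imJ_mul,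
      Quaternion.imK_mul, hq1, hq2, hq3, hq4, hp1, hp2, hp3, hp4]
    ring_nf
    have : α * ↑a₃ * β * ↑a₄ ^ 3 * 2 + α * ↑a₃ ^ 3 * β * ↑a₄ * 2
        = α * β * ↑a₃ * ↑a₄ * 2 * ((a₃ : ℂ) ^ 2 + (a₄ : ℂ) ^ 2) := by ring
    rw [this, hcast, mul_one]
    simp only [norm_mul, Complex.norm_real, Real.norm_eq_abs, Complex.norm_two]
    ring
  refine ⟨key, ?_⟩
  rw [key]
  simp [mul_eq_zero, hα, hβ, ha₃, ha₄]
end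

section
/- Let α, β ∈ ℂ with α ≠ 0 and β ≠ 0 and |α|² + |β|² = 1, and let a₁, a₂ ∈ ℝ with a₁ ≠ 0, a₂ ≠ 0 and a₁² + a₂² = 1. Set q = α·i + β·k and p = a₁ + a₂·i in the biquaternions ℍ[ℂ]. Then the concurrence of Λ(q) = p·q·p equals 4·|α|·|β|·|a₁|·|a₂|; in particular C(p·q·p) ≠ 0, i.e., Λ(q) is entangled. -/
open Quaternion

theorem stmt_6 (α β : ℂ) (hα : α ≠ 0) (hβ : β ≠ 0)
    (hαβ : ‖α‖ ^ 2 + ‖β‖ ^ 2 = 1)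
    (a₁ a₂ : ℝ) (ha₁ : a₁ ≠ 0) (ha₂ : a₂ ≠ 0) (hab : a₁ ^ 2 + a₂ ^ 2 = 1)
    (q p : ℍ[ℂ]) (hq : q = (⟨0, α, 0, β⟩ : ℍ[ℂ])) (hp : p = (⟨(a₁ : ℂ), (a₂ : ℂ), 0, 0⟩ : ℍ[ℂ])) :
    concurrence (p * q * p) =
      4 * ‖α‖ * ‖β‖ * |a₁| * |a₂| ∧
    concurrence (p * q * p) ≠ 0 := by
  subst hq hp
  have h1 : ((a₁ : ℂ) ^ 2 + (a₂ : ℂ) ^ 2) = 1 := by exact_mod_cast congrArg (Complex.ofReal) hab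
  have hval : concurrence ((⟨(a₁ : ℂ), (a₂ : ℂ), 0, 0⟩ : ℍ[ℂ]) * (⟨0, α, 0, β⟩ : ℍ[ℂ]) *
      (⟨(a₁ : ℂ), (a₂ : ℂ), 0, 0⟩ : ℍ[ℂ]))
      = 4 * ‖α‖ * ‖β‖ * |a₁| * |a₂| := by
    simp only [concurrence, QuaternionAlgebra.re_mul, QuaternionAlgebra.imI_mul,
      QuaternionAlgebra.imJ_mul, QuaternionAlgebra.imK_mul]
    ring_nf
    have key : (-(↑a₁ * ↑a₂ ^ 3 * α * β * 2) - ↑a₁ ^ 3 * ↑a₂ * α * β * 2 : ℂ)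
        = -((2 : ℂ) * ↑a₁ * ↑a₂) * α * β := by
      linear_combination (-(2:ℂ) * a₁ * a₂ * α * β) * h1
    rw [key]
    simp only [norm_mul, norm_neg, Complex.norm_real, Real.norm_eq_abs,
      Complex.norm_two]
    ring
  refine ⟨hval, ?_⟩
  refine ne_of_eq_of_ne hval ?_
  have h2 := norm_pos_iff.mpr hα
  have h3 := norm_pos_iff.mpr hβ
  positivity
end

section
/- Let α, β ∈ ℂ with α ≠ 0 and β ≠ 0 and |α|² + |β|² = 1, and let a₃, a₄ ∈ ℝ with a₃ ≠ 0, a₄ ≠ 0 and a₃² + a₄² = 1. Set q = α·i + β·k and p = a₃·j + a₄·k in the biquaternions ℍ[ℂ]. Then the concurrence of Λ(q) = p·q·p equals 4·|α|·|β|·|a₃|·|a₄|; in particular C(p·q·p) ≠ 0, i.e., Λ(q) is entangled. -/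
open Quaternion

theorem stmt_7 (α β : ℂ) (hα : α ≠ 0) (hβ : β ≠ 0)
    (hαβ : ‖α‖ ^ 2 + ‖β‖ ^ 2 = 1)
    (a₃ a₄ : ℝ) (ha₃ : a₃ ≠ 0) (ha₄ : a₄ ≠ 0) (hab : a₃ ^ 2 + a₄ ^ 2 = 1)
    (q p : ℍ[ℂ]) (hq : q = (⟨0, α, 0, β⟩ : ℍ[ℂ])) (hp : p = (⟨0, 0, (a₃ : ℂ), (a₄ : ℂ)⟩ : ℍ[ℂ])) :
    concurrence (p * q * p) =
      4 * ‖α‖ * ‖β‖ * |a₃| * |a₄| ∧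
    concurrence (p * q * p) ≠ 0 := by
  have hcast : ((a₃ : ℂ) ^ 2 + (a₄ : ℂ) ^ 2) = 1 := by
    have := congrArg (Complex.ofReal) hab
    push_cast at this
    exact this
  have h : (p * q * p).re * (p * q * p).imK - (p * q * p).imI * (p * q * p).imJ
      = 2 * a₃ * a₄ * α * β := by
    have e1 : p.re = 0 := by subst hp; rfl
    have e2 : p.imI = 0 := by subst hp; rfl
    have e3 : p.imJ = (a₃ : ℂ) := by subst hp; rfl
    have e4 : p.imK = (a₄ : ℂ) := by subst hp; rfl
    have f1 : q.re = 0 := by subst hq; rfl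
    have f2 : q.imI = α := by subst hq; rfl
    have f3 : q.imJ = 0 := by subst hq; rfl
    have f4 : q.imK = β := by subst hq; rfl
    simp only [Quaternion.re_mul, Quaternion.imI_mul, Quaternion.imJ_mul, Quaternion.imK_mul,
      e1, e2, e3, e4, f1, f2, f3, f4]
    linear_combination (2 * (a₃ : ℂ) * a₄ * α * β) * hcast
  have hkey : concurrence (p * q * p) = 4 * ‖α‖ * ‖β‖ * |a₃| * |a₄| := by
    rw [concurrence, h]
    have : ‖(2 * ↑a₃ * ↑a₄ * α * β : ℂ)‖
        = 2 * |a₃| * |a₄| * ‖α‖ * ‖β‖ := by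
      simp [map_mul, Complex.norm_real]
    rw [this]; ring
  refine ⟨hkey, ?_⟩
  rw [hkey]
  have h1 : ‖α‖ ≠ 0 := norm_ne_zero_iff.mpr hα
  have h2 : ‖β‖ ≠ 0 := norm_ne_zero_iff.mpr hβ
  exact mul_ne_zero (mul_ne_zero (mul_ne_zero (mul_ne_zero (by norm_num) h1) h2)
    (abs_ne_zero.mpr ha₃)) (abs_ne_zero.mpr ha₄)
end

section
/- Let α, β ∈ ℂ with α ≠ 0, β ≠ 0, |α|² + |β|² = 1, and let a, b ∈ ℝ with a ≠ 0, b ≠ 0, a² + b² = 1. Suppose the pair (q, p) of biquaternions is one of the eight admissible configurations: q = α + β·i with p = a + b·j or p = a·i + b·k; q = α·j + β·k with p = a + b·j or p = a·i + b·k; q = α + β·j with p = a + b·i or p = a·j + b·k; q = α·i + β·k with p = a + b·i or p = a·j + b·k. Then the map Λ(q) = p·q·p produces an entangled biquaternion: C(p·q·p) ≠ 0. -/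
open Quaternion

theorem stmt_8 (α β : ℂ) (hα : α ≠ 0) (hβ : β ≠ 0)
    (hαβ : ‖α‖ ^ 2 + ‖β‖ ^ 2 = 1)
    (a b : ℝ) (ha : a ≠ 0) (hb : b ≠ 0) (hab : a ^ 2 + b ^ 2 = 1)
    (q p : ℍ[ℂ])
    (hconfig :
      (q = (⟨α, β, 0, 0⟩ : ℍ[ℂ]) ∧
        (p = (⟨(a : ℂ), 0, (b : ℂ), 0⟩ : ℍ[ℂ]) ∨
         p = (⟨0, (a : ℂ), 0, (b : ℂ)⟩ : ℍ[ℂ]))) ∨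
      (q = (⟨0, 0, α, β⟩ : ℍ[ℂ]) ∧
        (p = (⟨(a : ℂ), 0, (b : ℂ), 0⟩ : ℍ[ℂ]) ∨
         p = (⟨0, (a : ℂ), 0, (b : ℂ)⟩ : ℍ[ℂ]))) ∨
      (q = (⟨α, 0, β, 0⟩ : ℍ[ℂ]) ∧
        (p = (⟨(a : ℂ), (b : ℂ), 0, 0⟩ : ℍ[ℂ]) ∨
         p = (⟨0, 0, (a : ℂ), (b : ℂ)⟩ : ℍ[ℂ]))) ∨
      (q = (⟨0, α, 0, β⟩ : ℍ[ℂ]) ∧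
        (p = (⟨(a : ℂ), (b : ℂ), 0, 0⟩ : ℍ[ℂ]) ∨
         p = (⟨0, 0, (a : ℂ), (b : ℂ)⟩ : ℍ[ℂ])))) :
    concurrence (p * q * p) ≠ 0 := by
  rcases hconfig with ⟨hq, hp | hp⟩ | ⟨hq, hp | hp⟩ | ⟨hq, hp | hp⟩ | ⟨hq, hp | hp⟩ <;>
    subst hq hp <;>
  · unfold concurrence
    refine mul_ne_zero two_ne_zero (norm_ne_zero_iff.mpr ?_)
    repeat erw [Quaternion.re_mul]
    repeat erw [Quaternion.imI_mul]
    repeat erw [Quaternion.imJ_mul]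
    repeat erw [Quaternion.imK_mul]
    repeat erw [Quaternion.re_mul]
    repeat erw [Quaternion.imI_mul]
    repeat erw [Quaternion.imJ_mul]
    repeat erw [Quaternion.imK_mul]
    intro h
    have h2 : (a:ℂ)^2 + (b:ℂ)^2 = 1 := by exact_mod_cast hab
    have h0 : (a:ℂ)*(b:ℂ)*α*β = 0 := by
      first
      | linear_combination ((1:ℂ)/2)*h - (a:ℂ)*(b:ℂ)*α*β*h2
      | linear_combination (-(1:ℂ)/2)*h - (a:ℂ)*(b:ℂ)*α*β*h2
    simp [mul_eq_zero, Complex.ofReal_eq_zero, ha, hb, hα, hβ] at h0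
end

section
/- Let α, β ∈ ℂ and a₁, a₃ ∈ ℝ with |α|² + |β|² = 1 and a₁² + a₃² = 1, and suppose |α|·|β|·|a₁|·|a₃| = 1/4. Set q = α + β·i and p = a₁ + a₃·j in the biquaternions ℍ[ℂ]. Then C(p·q·p) = 1, i.e., Λ(q) = p·q·p is maximally entangled. In particular this holds when |α| = |β| = 1/√2 and a₁ = a₃ = 1/√2. -/
open Quaternion

theorem stmt_9 (α β : ℂ) (a₁ a₃ : ℝ)
    (hαβ : ‖α‖ ^ 2 + ‖β‖ ^ 2 = 1)
    (ha : a₁ ^ 2 + a₃ ^ 2 = 1)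
    (hmax : ‖α‖ * ‖β‖ * |a₁| * |a₃| = 1 / 4)
    (q p : ℍ[ℂ]) (hq : q = (⟨α, β, 0, 0⟩ : ℍ[ℂ]))
    (hp : p = (⟨(a₁ : ℂ), 0, (a₃ : ℂ), 0⟩ : ℍ[ℂ])) :
    concurrence (p * q * p) = 1 := by
  unfold concurrence
  simp only [Quaternion.re_mul, Quaternion.imI_mul, Quaternion.imJ_mul, Quaternion.imK_mul]
  have e1 : p.re = (a₁ : ℂ) := by rw [hp]
  have e2 : p.imI = 0 := by rw [hp]
  have e3 : p.imJ = (a₃ : ℂ) := by rw [hp]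
  have e4 : p.imK = 0 := by rw [hp]
  have f1 : q.re = α := by rw [hq]
  have f2 : q.imI = β := by rw [hq]
  have f3 : q.imJ = 0 := by rw [hq]
  have f4 : q.imK = 0 := by rw [hq]
  rw [e1, e2, e3, e4, f1, f2, f3, f4]
  ring_nf
  have h1 : (-(↑a₁ * α * β * ↑a₃ ^ 3 * 2) - ↑a₁ ^ 3 * α * β * ↑a₃ * 2 : ℂ) =
      -((((a₁ ^ 2 + a₃ ^ 2 : ℝ)) : ℂ) * ((a₁ : ℂ) * (a₃ : ℂ) * α * β * 2)) := by
    push_cast; ring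
  rw [h1, ha]
  simp only [norm_neg, norm_mul, Complex.norm_real, Real.norm_eq_abs, Complex.norm_two, abs_one,
    Complex.ofReal_one, one_mul, norm_one]
  nlinarith [hmax]
end
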